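/- Let f : ℝⁿ → ℝ be convex and continuously differentiable with minimizer X*, and let α, β, γ : (0,∞) → ℝ be C¹ with β̇ ≤ e^α and γ̇ = e^α. If X : (0,∞) → ℝⁿ solves Ẍ + (e^α − α̇)Ẋ + e^{2α+β}∇f(X) = 0 (the Euclidean Bregman Euler–Lagrange equation), then the energy E(t) = D_h(X* , X + e^{−α}Ẋ) + e^{β}(f(X) − f(X*)) with h(X) = ‖X‖²/2 is non-increasing along the solution, and consequently f(X(t)) − f(X*) ≤ E(t₀) e^{−β(t)} for t ≥ t₀. -/

import Mathlib

open Real Set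
open scoped RealInnerProductSpace

/-- Gradient inequality for convex differentiable functions. -/
lemma grad_ineq {n : ℕ} {f : EuclideanSpace ℝ (Fin n) → ℝ}
    (hf : ContDiff ℝ 1 f) (hconv : ConvexOn ℝ Set.univ f)
    (x y : EuclideanSpace ℝ (Fin n)) :
    ⟪gradient f x, y - x⟫ ≤ f y - f x := by
  set c : ℝ → EuclideanSpace ℝ (Fin n) := fun s => x + s • (y - x) with hc
  have hcderiv : HasDerivAt c (y - x) 0 := by
    simpa [hc] using ((hasDerivAt_id (0:ℝ)).smul_const (y - x)).const_add x
  have hdiff : DifferentiableAt ℝ f (c 0) :=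
    (hf.differentiable one_ne_zero).differentiableAt
  have hgrad : HasGradientAt f (gradient f (c 0)) (c 0) := hdiff.hasGradientAt
  have hcomp : HasDerivAt (fun s => f (c s)) ⟪gradient f (c 0), y - x⟫ 0 := by
    have := hgrad.hasFDerivAt.comp_hasDerivAt 0 hcderiv
    exact this.congr_deriv (by simp [InnerProductSpace.toDual_apply_apply])
  have hconv1 : ConvexOn ℝ Set.univ (fun s => f (c s)) := by
    have h := hconv.comp_affineMap (AffineMap.lineMap x y : ℝ →ᵃ[ℝ] EuclideanSpace ℝ (Fin n))
    have hpre : ((AffineMap.lineMap x y : ℝ →ᵃ[ℝ] EuclideanSpace ℝ (Fin n)) ⁻¹' Set.univ)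
        = Set.univ := by simp
    rw [hpre] at h
    have hfun : (fun s => f (c s))
        = f ∘ (AffineMap.lineMap x y : ℝ →ᵃ[ℝ] EuclideanSpace ℝ (Fin n)) := by
      funext s
      simp [Function.comp, AffineMap.lineMap_apply, hc, add_comm]
    rw [hfun]; exact h
  have hslope := hconv1.le_slope_of_hasDerivAt (Set.mem_univ 0) (Set.mem_univ 1)
    one_pos hcomp
  have hc0 : c 0 = x := by simp [hc]
  have hc1 : c 1 = y := by simp [hc]
  simpa [slope_def_field, hc0, hc1] using hslope

/-- The Lyapunov energy
`E(t) = ‖X* − X(t) − e^{−α(t)}Ẋ(t)‖²/2 + e^{β(t)}(f(X(t)) − f(X*))`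
(the Euclidean Bregman energy, `h(X) = ‖X‖²/2`). -/
noncomputable def energy {n : ℕ} (f : EuclideanSpace ℝ (Fin n) → ℝ)
    (Xstar : EuclideanSpace ℝ (Fin n)) (α β : ℝ → ℝ)
    (X X' : ℝ → EuclideanSpace ℝ (Fin n)) (t : ℝ) : ℝ :=
  ‖Xstar - X t - Real.exp (-α t) • X' t‖ ^ 2 / 2
    + Real.exp (β t) * (f (X t) - f Xstar)

/-- Let `f` be convex and continuously differentiable with minimizer `X*`, and let
`α, β, γ : (0,∞) → ℝ` be `C¹` with `β̇ ≤ e^α` and `γ̇ = e^α` (ideal scaling).  If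
`X` solves the Euclidean Bregman Euler–Lagrange equation
`Ẍ + (e^α − α̇)Ẋ + e^{2α+β}∇f(X) = 0`, then the energy `E` is non-increasing on
`(0,∞)`, and consequently `f(X(t)) − f(X*) ≤ E(t₀) e^{−β(t)}` for `t ≥ t₀ > 0`. -/
theorem stmt17 (n : ℕ) (f : EuclideanSpace ℝ (Fin n) → ℝ)
    (hf : ContDiff ℝ 1 f) (hconv : ConvexOn ℝ Set.univ f)
    (Xstar : EuclideanSpace ℝ (Fin n)) (hmin : ∀ y, f Xstar ≤ f y)
    (α β γ α' β' γ' : ℝ → ℝ)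
    (hα : ∀ t ∈ Set.Ioi (0 : ℝ), HasDerivAt α (α' t) t)
    (hβ : ∀ t ∈ Set.Ioi (0 : ℝ), HasDerivAt β (β' t) t)
    (hγ : ∀ t ∈ Set.Ioi (0 : ℝ), HasDerivAt γ (γ' t) t)
    (hα' : ContinuousOn α' (Set.Ioi 0))
    (hβ' : ContinuousOn β' (Set.Ioi 0))
    (hγ' : ContinuousOn γ' (Set.Ioi 0))
    (hideal₁ : ∀ t ∈ Set.Ioi (0 : ℝ), β' t ≤ Real.exp (α t))
    (hideal₂ : ∀ t ∈ Set.Ioi (0 : ℝ), γ' t = Real.exp (α t))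
    (X X' X'' : ℝ → EuclideanSpace ℝ (Fin n))
    (hX : ∀ t ∈ Set.Ioi (0 : ℝ), HasDerivAt X (X' t) t)
    (hX' : ∀ t ∈ Set.Ioi (0 : ℝ), HasDerivAt X' (X'' t) t)
    (hode : ∀ t ∈ Set.Ioi (0 : ℝ),
      X'' t + (Real.exp (α t) - α' t) • X' t
        + Real.exp (2 * α t + β t) • gradient f (X t) = 0) :
    (∀ s t : ℝ, 0 < s → s ≤ t →
      energy f Xstar α β X X' t ≤ energy f Xstar α β X X' s) ∧
    (∀ t₀ t : ℝ, 0 < t₀ → t₀ ≤ t →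
      f (X t) - f Xstar ≤ energy f Xstar α β X X' t₀ * Real.exp (-β t)) := by
  classical
  set Z : ℝ → EuclideanSpace ℝ (Fin n) :=
    fun t => Xstar - X t - Real.exp (-α t) • X' t with hZ
  set E : ℝ → ℝ := energy f Xstar α β X X' with hE
  set D : ℝ → ℝ := fun t =>
    Real.exp (α t + β t) * ⟪gradient f (X t), Xstar - X t⟫
      + β' t * Real.exp (β t) * (f (X t) - f Xstar) with hD
  -- the key derivative computation
  have hEderiv : ∀ t ∈ Set.Ioi (0 : ℝ), HasDerivAt E (D t) t := by
    intro t ht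
    -- derivative of Z
    have hexp : HasDerivAt (fun t => Real.exp (-α t))
        (-α' t * Real.exp (-α t)) t := by
      have := ((hα t ht).neg).exp
      simpa [mul_comm] using this
    have hZd : HasDerivAt Z
        (-(X' t) - ((-α' t * Real.exp (-α t)) • X' t
          + Real.exp (-α t) • X'' t)) t := by
      have h1 : HasDerivAt (fun t => Xstar - X t) (-(X' t)) t := by
        simpa using (hX t ht).const_sub Xstar
      have h2 : HasDerivAt (fun t => Real.exp (-α t) • X' t)
          (Real.exp (-α t) • X'' t + (-α' t * Real.exp (-α t)) • X' t) t :=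
        hexp.smul (hX' t ht)
      exact (h1.sub h2).congr_deriv (by abel)
    -- simplify Z' using the ODE
    have hode' : X'' t = -((Real.exp (α t) - α' t) • X' t)
        - Real.exp (2 * α t + β t) • gradient f (X t) := by
      have := hode t ht
      have h := congrArg (fun v => v - (Real.exp (α t) - α' t) • X' t
        - Real.exp (2 * α t + β t) • gradient f (X t)) this
      simp only [zero_sub] at h
      rw [← h]; abel
    have hZd' : HasDerivAt Z
        (Real.exp (α t + β t) • gradient f (X t)) t := by
      convert hZd using 1
      rw [hode']
      have e1 : Real.exp (-α t) * Real.exp (2 * α t + β t)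
          = Real.exp (α t + β t) := by
        rw [← Real.exp_add]; ring_nf
      have e2 : Real.exp (-α t) * Real.exp (α t) = 1 := by
        rw [← Real.exp_add]; simp
      simp only [smul_sub, smul_neg, smul_smul, sub_smul, smul_add]
      rw [e1, e2]
      module
    -- derivative of the norm-squared part
    have hNorm : HasDerivAt (fun t => ‖Z t‖ ^ 2 / 2)
        ((⟪Z t, Real.exp (α t + β t) • gradient f (X t)⟫
          + ⟪Real.exp (α t + β t) • gradient f (X t), Z t⟫) / 2) t := by
      have h := (hZd'.inner (𝕜 := ℝ) hZd').div_const 2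
      have heq : (fun t => ‖Z t‖ ^ 2 / 2) = fun t => ⟪Z t, Z t⟫ / 2 := by
        funext s; rw [real_inner_self_eq_norm_sq]
      rw [heq]; exact h
    -- derivative of f ∘ X
    have hfX : HasDerivAt (fun t => f (X t)) ⟪gradient f (X t), X' t⟫ t := by
      have hdiff : DifferentiableAt ℝ f (X t) :=
        (hf.differentiable one_ne_zero).differentiableAt
      have := hdiff.hasGradientAt.hasFDerivAt.comp_hasDerivAt t (hX t ht)
      exact this.congr_deriv (by simp [InnerProductSpace.toDual_apply_apply])
    have hSecond : HasDerivAt (fun t => Real.exp (β t) * (f (X t) - f Xstar))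
        ((β' t * Real.exp (β t)) * (f (X t) - f Xstar)
          + Real.exp (β t) * ⟪gradient f (X t), X' t⟫) t := by
      have hb : HasDerivAt (fun t => Real.exp (β t))
          (β' t * Real.exp (β t)) t := by
        simpa [mul_comm] using (hβ t ht).exp
      exact hb.mul (hfX.sub_const (f Xstar))
    have := hNorm.add hSecond
    have hEfun : E = fun t => ‖Z t‖ ^ 2 / 2
        + Real.exp (β t) * (f (X t) - f Xstar) := rfl
    rw [hEfun]
    refine this.congr_deriv ?_
    -- algebraic identity: D t equals the computed derivative
    have e2 : Real.exp (α t + β t) * Real.exp (-α t) = Real.exp (β t) := by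
      rw [← Real.exp_add]; ring_nf
    simp only [hD, hZ, real_inner_smul_left, real_inner_smul_right,
      inner_sub_left, inner_sub_right]
    rw [real_inner_comm Xstar (gradient f (X t)), real_inner_comm (X t) (gradient f (X t)),
      real_inner_comm (X' t) (gradient f (X t))]
    have hcomm : (⟪X' t, gradient f (X t)⟫ : ℝ) = ⟪gradient f (X t), X' t⟫ :=
      real_inner_comm _ _
    linear_combination (⟪gradient f (X t), X' t⟫ : ℝ) * e2
      + (Real.exp (α t + β t) * Real.exp (-α t) - Real.exp (β t)) * hcomm
      + (-2 * (⟪X' t, gradient f (X t)⟫ : ℝ)) * e2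
  -- the derivative is nonpositive
  have hDnonpos : ∀ t ∈ Set.Ioi (0 : ℝ), D t ≤ 0 := by
    intro t ht
    have h1 : ⟪gradient f (X t), Xstar - X t⟫ ≤ f Xstar - f (X t) :=
      grad_ineq hf hconv (X t) Xstar
    have h2 : (0:ℝ) ≤ f (X t) - f Xstar := by linarith [hmin (X t)]
    have h3 : β' t * Real.exp (β t) * (f (X t) - f Xstar)
        ≤ Real.exp (α t) * Real.exp (β t) * (f (X t) - f Xstar) := by
      nlinarith [mul_nonneg (mul_nonneg (sub_nonneg.mpr (hideal₁ t ht))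
        (Real.exp_pos (β t)).le) h2]
    have h4 : Real.exp (α t + β t) * ⟪gradient f (X t), Xstar - X t⟫
        ≤ Real.exp (α t + β t) * (f Xstar - f (X t)) := by
      nlinarith [Real.exp_pos (α t + β t)]
    have h5 : Real.exp (α t + β t) = Real.exp (α t) * Real.exp (β t) :=
      Real.exp_add _ _
    simp only [hD]
    nlinarith
  -- antitonicity
  have hanti : AntitoneOn E (Set.Ioi 0) := by
    apply antitoneOn_of_deriv_nonpos (convex_Ioi 0)
    · intro t ht
      exact (hEderiv t ht).continuousAt.continuousWithinAt
    · rw [interior_Ioi]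
      intro t ht
      exact (hEderiv t ht).differentiableAt.differentiableWithinAt
    · rw [interior_Ioi]
      intro t ht
      rw [(hEderiv t ht).deriv]
      exact hDnonpos t ht
  constructor
  · intro s t hs hst
    exact hanti (Set.mem_Ioi.mpr hs) (Set.mem_Ioi.mpr (lt_of_lt_of_le hs hst)) hst
  · intro t₀ t ht₀ hle
    have ht : (0:ℝ) < t := lt_of_lt_of_le ht₀ hle
    have hEt : E t ≤ E t₀ := hanti (Set.mem_Ioi.mpr ht₀) (Set.mem_Ioi.mpr ht) hle
    have hlow : Real.exp (β t) * (f (X t) - f Xstar) ≤ E t := by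
      have : (0:ℝ) ≤ ‖Z t‖ ^ 2 / 2 := by positivity
      simp only [hE, energy]; linarith
    have hexp := Real.exp_pos (β t)
    have : Real.exp (β t) * (f (X t) - f Xstar) ≤ E t₀ := le_trans hlow hEt
    have hfin : f (X t) - f Xstar ≤ E t₀ / Real.exp (β t) := by
      rw [le_div_iff₀ hexp]; linarith [this]
    calc f (X t) - f Xstar ≤ E t₀ / Real.exp (β t) := hfin
      _ = energy f Xstar α β X X' t₀ * Real.exp (-β t) := by
          rw [Real.exp_neg, div_eq_mul_inv]
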